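/- Let δ ≥ 2 be a real number, k ≥ 2 an integer, and ε a real with (δ−1)/(2δ) ≤ ε ≤ ((δ−1)/(2δ))^{1/k}. Set λ₀ := (1−ε)δ and λ := (δ+1)/2. Let x_1, …, x_m ∈ [0,1] be reals and define C₁ := {j : x_j ≥ 2/(δ+1)}, C₂ := {j : 1/δ ≤ x_j < 2/(δ+1)}, C₃ := {j : 0 < x_j < 1/δ}. Then |C₁| + ∑_{j ∈ C₂} (1 − (1 − λ₀ x_j)^k) + ∑_{j ∈ C₃} (1−ε^k)·δ·x_j ≤ (1−ε^k)·δ·∑_{j=1}^m x_j. -/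

import Mathlib

/-- Deterministic form of the bound `𝔼[X] ≤ (1-ε^k)·δ·Opt*`. -/
theorem stmt_7 (δ : ℝ) (hδ : 2 ≤ δ) (k : ℕ) (hk : 2 ≤ k)
    (ε : ℝ) (hε1 : (δ - 1) / (2 * δ) ≤ ε)
    (hε2 : ε ≤ ((δ - 1) / (2 * δ)) ^ ((1 : ℝ) / k))
    (m : ℕ) (x : Fin m → ℝ) (hx : ∀ j, x j ∈ Set.Icc (0 : ℝ) 1) :
    ((Finset.univ.filter (fun j : Fin m => 2 / (δ + 1) ≤ x j)).card : ℝ)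
      + (∑ j ∈ Finset.univ.filter
            (fun j : Fin m => 1 / δ ≤ x j ∧ x j < 2 / (δ + 1)),
          (1 - (1 - (1 - ε) * δ * x j) ^ k))
      + (∑ j ∈ Finset.univ.filter
            (fun j : Fin m => 0 < x j ∧ x j < 1 / δ),
          (1 - ε ^ k) * δ * x j)
      ≤ (1 - ε ^ k) * δ * ∑ j, x j := by
  have hδ0 : (0:ℝ) < δ := by linarith
  have hδ1 : (0:ℝ) < δ + 1 := by linarith
  have hb0 : (0:ℝ) ≤ (δ - 1) / (2 * δ) := div_nonneg (by linarith) (by linarith)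
  have hb1 : (δ - 1) / (2 * δ) ≤ 1 := by
    rw [div_le_one (by linarith)]; linarith
  have hε0 : (0:ℝ) ≤ ε := le_trans hb0 hε1
  have hε_le1 : ε ≤ 1 := by
    refine le_trans hε2 (Real.rpow_le_one hb0 hb1 ?_)
    positivity
  have hk0 : (k:ℝ) ≠ 0 := by
    have : 0 < k := by omega
    exact_mod_cast this.ne'
  have hεk : ε ^ k ≤ (δ - 1) / (2 * δ) := by
    calc ε ^ k ≤ (((δ - 1) / (2 * δ)) ^ ((1:ℝ)/k)) ^ k :=
          pow_le_pow_left₀ hε0 hε2 k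
      _ = (δ - 1) / (2 * δ) := by
          rw [← Real.rpow_natCast (((δ - 1) / (2 * δ)) ^ ((1:ℝ)/k)) k,
            ← Real.rpow_mul hb0, one_div, inv_mul_cancel₀ hk0, Real.rpow_one]
  -- 1 - ε^k ≥ (δ+1)/(2δ)
  have hsum : (δ - 1) / (2 * δ) + (δ + 1) / (2 * δ) = 1 := by
    field_simp; ring
  have h1ek : (δ + 1) / (2 * δ) ≤ 1 - ε ^ k := by linarith
  have h1e : 1 - ε ≤ (δ + 1) / (2 * δ) := by linarith
  set S1 := Finset.univ.filter (fun j : Fin m => 2 / (δ + 1) ≤ x j) with hS1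
  set S2 := Finset.univ.filter
      (fun j : Fin m => 1 / δ ≤ x j ∧ x j < 2 / (δ + 1)) with hS2
  set S3 := Finset.univ.filter
      (fun j : Fin m => 0 < x j ∧ x j < 1 / δ) with hS3
  have hc0 : 0 ≤ (1 - ε ^ k) * δ := by
    have : 0 ≤ (δ + 1) / (2 * δ) := by positivity
    nlinarith
  -- bound for S1
  have hbd1 : ∀ j ∈ S1, (1:ℝ) ≤ (1 - ε ^ k) * δ * x j := by
    intro j hj
    rw [hS1, Finset.mem_filter] at hj
    have hxj := hj.2
    have h2 : 2 / (δ + 1) * (δ + 1) = 2 := by field_simp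
    have hcx : (δ + 1) / (2 * δ) * δ * (2 / (δ + 1)) ≤ (1 - ε ^ k) * δ * x j := by
      have := mul_le_mul (mul_le_mul_of_nonneg_right h1ek hδ0.le) hxj
        (by positivity) hc0
      linarith
    have : (δ + 1) / (2 * δ) * δ * (2 / (δ + 1)) = 1 := by
      field_simp
    linarith
  -- bound for S2
  have hbd2 : ∀ j ∈ S2, 1 - (1 - (1 - ε) * δ * x j) ^ k ≤ (1 - ε ^ k) * δ * x j := by
    intro j hj
    rw [hS2, Finset.mem_filter] at hj
    obtain ⟨hlo, hhi⟩ := hj.2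
    have hx0 : 0 ≤ x j := (hx j).1
    set t := 1 - (1 - ε) * δ * x j with ht
    have hδx : 1 ≤ δ * x j := by
      rw [div_le_iff₀ hδ0] at hlo
      linarith [hlo]
    have hA : (1 - ε) * (2 * δ) ≤ δ + 1 := by
      rw [le_div_iff₀ (by linarith : (0:ℝ) < 2 * δ)] at h1e
      linarith
    have hB : x j * (δ + 1) ≤ 2 := by
      rw [lt_div_iff₀ hδ1] at hhi
      linarith
    have ht0 : 0 ≤ t := by
      have hprod : ((1 - ε) * (2 * δ)) * (x j * (δ + 1)) ≤ (δ + 1) * 2 :=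
        mul_le_mul hA hB (by positivity) (by linarith)
      have : (1 - ε) * δ * x j ≤ 1 := by nlinarith
      simp only [ht]; linarith
    have htε : t ≤ ε := by
      have : 1 - ε ≤ (1 - ε) * (δ * x j) :=
        le_mul_of_one_le_right (by linarith) hδx
      simp only [ht]; nlinarith
    have hgeom_t : 1 - t ^ k = (∑ i ∈ Finset.range k, t ^ i) * (1 - t) := by
      linear_combination geom_sum_mul t k
    have hgeom_e : 1 - ε ^ k = (∑ i ∈ Finset.range k, ε ^ i) * (1 - ε) := by
      linear_combination geom_sum_mul ε k
    have hsum_le : (∑ i ∈ Finset.range k, t ^ i) ≤ ∑ i ∈ Finset.range k, ε ^ i :=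
      Finset.sum_le_sum fun i _ => pow_le_pow_left₀ ht0 htε i
    have h1t : 1 - t = (1 - ε) * δ * x j := by simp [ht]
    calc 1 - t ^ k = (∑ i ∈ Finset.range k, t ^ i) * ((1 - ε) * δ * x j) := by
          rw [hgeom_t, h1t]
      _ ≤ (∑ i ∈ Finset.range k, ε ^ i) * ((1 - ε) * δ * x j) := by
          apply mul_le_mul_of_nonneg_right hsum_le
          have : 0 ≤ 1 - ε := by linarith
          positivity
      _ = (1 - ε ^ k) * δ * x j := by rw [hgeom_e]; ring
  -- disjointness
  have hd12 : Disjoint S1 S2 := by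
    rw [Finset.disjoint_left]
    intro j hj1 hj2
    rw [hS1, Finset.mem_filter] at hj1
    rw [hS2, Finset.mem_filter] at hj2
    linarith [hj1.2, hj2.2.2]
  have h13 : 1 / δ ≤ 2 / (δ + 1) := by
    rw [div_le_div_iff₀ hδ0 hδ1]; linarith
  have hd13 : Disjoint (S1 ∪ S2) S3 := by
    rw [Finset.disjoint_left]
    intro j hj1 hj3
    rw [hS3, Finset.mem_filter] at hj3
    rcases Finset.mem_union.mp hj1 with h | h
    · rw [hS1, Finset.mem_filter] at h
      linarith [h.2, hj3.2.2]
    · rw [hS2, Finset.mem_filter] at h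
      linarith [h.2.1, hj3.2.2]
  have step1 : ((S1.card : ℝ)
        + (∑ j ∈ S2, (1 - (1 - (1 - ε) * δ * x j) ^ k))
        + (∑ j ∈ S3, (1 - ε ^ k) * δ * x j))
      ≤ ∑ j ∈ S1 ∪ S2 ∪ S3, (1 - ε ^ k) * δ * x j := by
    rw [Finset.sum_union hd13, Finset.sum_union hd12]
    have e1 : (S1.card : ℝ) ≤ ∑ j ∈ S1, (1 - ε ^ k) * δ * x j := by
      rw [Finset.card_eq_sum_ones]
      push_cast
      exact Finset.sum_le_sum hbd1
    have e2 : (∑ j ∈ S2, (1 - (1 - (1 - ε) * δ * x j) ^ k))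
        ≤ ∑ j ∈ S2, (1 - ε ^ k) * δ * x j := Finset.sum_le_sum hbd2
    linarith
  have step2 : ∑ j ∈ S1 ∪ S2 ∪ S3, (1 - ε ^ k) * δ * x j
      ≤ ∑ j : Fin m, (1 - ε ^ k) * δ * x j := by
    apply Finset.sum_le_sum_of_subset_of_nonneg (Finset.subset_univ _)
    intro j _ _
    exact mul_nonneg hc0 (hx j).1
  calc _ ≤ ∑ j ∈ S1 ∪ S2 ∪ S3, (1 - ε ^ k) * δ * x j := step1
    _ ≤ ∑ j : Fin m, (1 - ε ^ k) * δ * x j := step2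
    _ = (1 - ε ^ k) * δ * ∑ j, x j := by rw [Finset.mul_sum]
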